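/- Let F be a finite field with q elements where q ≡ 5 (mod 8). If (a₀,b₀) ∈ S_F^{adv_2} and b₁ ∈ F satisfies b₁² = a₀b₀, and a₁ = (a₀+b₀)/2, then exactly one of the two children (a₁,b₁) and (a₁,−b₁) of (a₀,b₀) lies in S_F^{adv_2}. -/
import Mathlib


namespace AGM

variable {K : Type*} [Field K]

/-- A node `(a,b)` is nontrivial if `a`, `b`, `a+b`, `a-b` are all nonzero. -/
def Nontriv (p : K × K) : Prop :=
  p.1 ≠ 0 ∧ p.2 ≠ 0 ∧ p.1 + p.2 ≠ 0 ∧ p.1 - p.2 ≠ 0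

/-- AGM advancement between nontrivial nodes: `2c = a + b` and `d² = ab`. -/
def Adv (p q : K × K) : Prop :=
  Nontriv p ∧ Nontriv q ∧ 2 * q.1 = p.1 + p.2 ∧ q.2 ^ 2 = p.1 * p.2

/-- `AdvN n p`: there is a chain of `n` successive AGM advancements through
nontrivial nodes starting at `p`. -/
def AdvN : ℕ → K × K → Prop
  | 0, p => Nontriv p
  | n + 1, p => ∃ q, Adv p q ∧ AdvN n q

/-- `BackN n p`: there is a chain of `n` successive AGM advancements through
nontrivial nodes ending at `p`. -/
def BackN : ℕ → K × K → Prop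
  | 0, p => Nontriv p
  | n + 1, p => ∃ q, Adv q p ∧ BackN n q

/-- Indefinitely advanceable nodes. -/
def AdvInf (p : K × K) : Prop := ∀ n, AdvN n p

/-- Indefinitely backtrackable nodes. -/
def BackInf (p : K × K) : Prop := ∀ n, BackN n p

/-- Nontrivial k-values: `k ∉ {0, 1, -1}`. -/
def Tk (k : K) : Prop := k ≠ 0 ∧ k ≠ 1 ∧ k ≠ -1

/-- k-advancement: `(1+k₁)² k₂² = 4 k₁` for nontrivial k-values. -/
def kAdv (k₁ k₂ : K) : Prop := Tk k₁ ∧ Tk k₂ ∧ (1 + k₁) ^ 2 * k₂ ^ 2 = 4 * k₁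

/-- `TAdvN n k`: a chain of `n` k-advancements within `T_K` starting at `k`. -/
def TAdvN : ℕ → K → Prop
  | 0, k => Tk k
  | n + 1, k => ∃ k₂, kAdv k k₂ ∧ TAdvN n k₂

/-- `TBackN n k`: a chain of `n` k-advancements within `T_K` ending at `k`. -/
def TBackN : ℕ → K → Prop
  | 0, k => Tk k
  | n + 1, k => ∃ k₁, kAdv k₁ k ∧ TBackN n k₁

/-- Indefinitely advanceable k-values. -/
def TAdvInf (k : K) : Prop := ∀ n, TAdvN n k

/-- Indefinitely backtrackable k-values. -/
def TBackInf (k : K) : Prop := ∀ n, TBackN n k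

end AGM

section AGMAux

variable {F : Type*} [Field F]

lemma my_child_adv2_iff (h2 : (2:F) ≠ 0) {i : F} (hi : i ^ 2 = -1)
    (a b a₂ f : F) (hnt : AGM.Nontriv (a, b)) (ha₂ : 2 * a₂ = a + b)
    (hf : f ^ 2 = a * b) :
    AGM.AdvN 2 (a, b) ↔ IsSquare (a₂ * f) := by
  obtain ⟨ha0, hb0, hab, hab'⟩ := hnt
  dsimp only at ha0 hb0 hab hab'
  have hf0 : f ≠ 0 := by
    intro h; rw [h] at hf; exact mul_ne_zero ha0 hb0 (by linear_combination -hf)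
  have ha₂0 : a₂ ≠ 0 := by
    intro h; rw [h] at ha₂; exact hab (by linear_combination -ha₂)
  constructor
  · intro h
    obtain ⟨p, ⟨-, -, hp1, hp2⟩, r, ⟨-, -, hr1, hr2⟩, -⟩ :
        ∃ p, AGM.Adv (a, b) p ∧ ∃ r, AGM.Adv p r ∧ AGM.Nontriv r := h
    dsimp only at hp1 hp2
    have hpa : p.1 = a₂ := mul_left_cancel₀ h2 (hp1.trans ha₂.symm)
    have hcases : (p.2 - f) * (p.2 + f) = 0 := by linear_combination hp2 - hf
    rcases mul_eq_zero.mp hcases with h | h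
    · have hpf : p.2 = f := by linear_combination h
      rw [hpa, hpf] at hr2
      exact ⟨r.2, by linear_combination -hr2⟩
    · have hpf : p.2 = -f := by linear_combination h
      rw [hpa, hpf] at hr2
      exact ⟨i * r.2, by linear_combination (-(r.2^2))*hi + hr2⟩
  · rintro ⟨u, hu⟩
    have hu0 : u ≠ 0 := by
      rintro rfl; exact mul_ne_zero ha₂0 hf0 (by linear_combination hu)
    have ha₂f : a₂ + f ≠ 0 := by
      intro h
      apply hab'
      have key : (a - b) ^ 2 = 0 := by
        linear_combination (4*a₂ - 4*f)*h - (2*a₂+a+b)*ha₂ + 4*hf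
      exact pow_eq_zero_iff (two_ne_zero) |>.mp key
    have ha₂f' : a₂ - f ≠ 0 := by
      intro h
      apply hab'
      have key : (a - b) ^ 2 = 0 := by
        linear_combination (4*a₂ + 4*f)*h - (2*a₂+a+b)*ha₂ + 4*hf
      exact pow_eq_zero_iff (two_ne_zero) |>.mp key
    have h2' : 2 * ((a₂ + f)/2) = a₂ + f := by field_simp
    have hc0 : (a₂ + f)/2 ≠ 0 := div_ne_zero ha₂f h2
    have hcu : (a₂ + f)/2 + u ≠ 0 := by
      intro h
      apply ha₂f'
      have key : (a₂ - f)^2 = 0 := by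
        linear_combination -(2*((a₂+f)/2)+a₂+f)*h2' + (4*((a₂+f)/2 - u))*h - 4*hu
      exact pow_eq_zero_iff (two_ne_zero) |>.mp key
    have hcu' : (a₂ + f)/2 - u ≠ 0 := by
      intro h
      apply ha₂f'
      have key : (a₂ - f)^2 = 0 := by
        linear_combination -(2*((a₂+f)/2)+a₂+f)*h2' + (4*((a₂+f)/2 + u))*h - 4*hu
      exact pow_eq_zero_iff (two_ne_zero) |>.mp key
    have hnt1 : AGM.Nontriv (a, b) := ⟨ha0, hb0, hab, hab'⟩
    have hnt2 : AGM.Nontriv (a₂, f) := ⟨ha₂0, hf0, ha₂f, ha₂f'⟩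
    have hnt3 : AGM.Nontriv ((a₂ + f)/2, u) := ⟨hc0, hu0, hcu, hcu'⟩
    exact ⟨(a₂, f), ⟨hnt1, hnt2, ha₂, hf⟩,
      ((a₂ + f)/2, u), ⟨hnt2, hnt3, h2', by rw [sq]; exact hu.symm⟩, hnt3⟩

variable [Fintype F] [DecidableEq F]

lemma my_two_ne_zero (hodd : Fintype.card F % 2 = 1) : (2 : F) ≠ 0 := by
  intro h
  have hdvd : ringChar F ∣ 2 := (ringChar.spec F 2).mp (by exact_mod_cast h)
  have hchar : ringChar F = 2 := by
    rcases (Nat.dvd_prime Nat.prime_two).mp hdvd with h1 | h1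
    · exact absurd ((ringChar.spec F 1).mpr (h1 ▸ dvd_refl _)) (by simp)
    · exact h1
  have := FiniteField.even_card_of_char_two hchar
  omega

lemma my_i_exists (q : ℕ) (hq : Fintype.card F = q) (h5 : q % 8 = 5) :
    ∃ i : F, i ^ 2 = -1 ∧ ¬ IsSquare i := by
  have hsq : IsSquare (-1 : F) := by
    rw [FiniteField.isSquare_neg_one_iff, hq]; omega
  obtain ⟨j, hj⟩ := hsq
  refine ⟨j, by rw [sq]; exact hj.symm, ?_⟩
  rintro ⟨k, hk⟩
  have hk0 : k ≠ 0 := by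
    rintro rfl
    rw [mul_zero] at hk
    rw [hk] at hj
    simp at hj
  have hk4 : k ^ 4 = -1 := by
    rw [show (4:ℕ) = 2*2 by norm_num, pow_mul, hj, hk]; ring
  have hk8 : k ^ 8 = 1 := by
    rw [show (8:ℕ) = 4*2 by norm_num, pow_mul, hk4]; ring
  set u : Fˣ := Units.mk0 k hk0 with hu
  have hu8 : u ^ 8 = 1 := by
    ext; push_cast [hu]; exact hk8
  have hu4 : u ^ 4 ≠ 1 := by
    intro h
    have h4 : k ^ 4 = 1 := by
      have := congrArg (Units.val) h
      push_cast [hu] at this; exact this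
    rw [hk4] at h4
    have h2 : (2 : F) ≠ 0 := my_two_ne_zero (by omega)
    apply h2
    linear_combination -h4
  have hdvd : orderOf u ∣ 8 := orderOf_dvd_of_pow_eq_one hu8
  have h4' : ¬ orderOf u ∣ 4 := fun h => hu4 (orderOf_dvd_iff_pow_eq_one.mp h)
  have hle : orderOf u ≤ 8 := Nat.le_of_dvd (by norm_num) hdvd
  have hord : orderOf u = 8 := by interval_cases (orderOf u) <;> revert hdvd h4' <;> decide
  have hcard : orderOf u ∣ q - 1 := by
    have := orderOf_dvd_card (x := u)
    rwa [Fintype.card_units, hq] at this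
  rw [hord] at hcard
  obtain ⟨m, hm⟩ := hcard
  omega

lemma my_xor_isSquare {i s x₁ x₂ : F}
    (hins : ¬ IsSquare i) (hs : s ≠ 0) (hx₁ : x₁ ≠ 0) (hx₂ : x₂ ≠ 0)
    (h : x₁ * x₂ = i * s ^ 2) : Xor' (IsSquare x₁) (IsSquare x₂) := by
  have hχi : quadraticChar F i = -1 := quadraticChar_neg_one_iff_not_isSquare.mpr hins
  have hprod : quadraticChar F x₁ * quadraticChar F x₂ = -1 := by
    rw [← map_mul, h, map_mul, hχi, quadraticChar_sq_one' hs]; norm_num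
  rcases quadraticChar_dichotomy hx₁ with h1 | h1 <;>
    rcases quadraticChar_dichotomy hx₂ with h2 | h2
  · rw [h1, h2] at hprod; norm_num at hprod
  · exact Or.inl ⟨(quadraticChar_one_iff_isSquare hx₁).mp h1,
      quadraticChar_neg_one_iff_not_isSquare.mp h2⟩
  · exact Or.inr ⟨(quadraticChar_one_iff_isSquare hx₂).mp h2,
      quadraticChar_neg_one_iff_not_isSquare.mp h1⟩
  · rw [h1, h2] at hprod; norm_num at hprod

end AGMAux

theorem stmt2 {F : Type*} [Field F] [Fintype F] (q : ℕ)
    (hq : Fintype.card F = q) (h5 : q % 8 = 5)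
    (a₀ b₀ a₁ b₁ : F) (hadv : AGM.AdvN 2 (a₀, b₀))
    (hb : b₁ ^ 2 = a₀ * b₀) (ha : a₁ = (a₀ + b₀) / 2) :
    Xor' (AGM.AdvN 2 (a₁, b₁)) (AGM.AdvN 2 (a₁, -b₁)) := by
  classical
  have hodd : Fintype.card F % 2 = 1 := by rw [hq]; omega
  have h2 : (2:F) ≠ 0 := my_two_ne_zero hodd
  have h4 : (4:F) ≠ 0 := by rw [show (4:F) = 2*2 by norm_num]; exact mul_ne_zero h2 h2
  obtain ⟨i, hi, hins⟩ := my_i_exists q hq h5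
  have hi0 : i ≠ 0 := by
    intro h; rw [h] at hi
    simp at hi
  obtain ⟨p, ⟨hnt0, hntp, hp1, hp2⟩, r, ⟨-, -, hr1, hr2⟩, -⟩ :
      ∃ p, AGM.Adv (a₀, b₀) p ∧ ∃ r, AGM.Adv p r ∧ AGM.Nontriv r := hadv
  obtain ⟨ha00, hb00, hab0, hab0'⟩ := hnt0
  dsimp only at ha00 hb00 hab0 hab0' hp1 hp2
  have h2a₁ : 2 * a₁ = a₀ + b₀ := by rw [ha]; field_simp
  have hpa : p.1 = a₁ := mul_left_cancel₀ h2 (hp1.trans h2a₁.symm)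
  have hb₁0 : b₁ ≠ 0 := by
    intro h; rw [h] at hb; exact mul_ne_zero ha00 hb00 (by linear_combination -hb)
  have ha₁0 : a₁ ≠ 0 := by rw [← hpa]; exact hntp.1
  have hd : (a₁ + b₁) * (a₁ - b₁) * 4 = (a₀ - b₀)^2 := by
    linear_combination (2*a₁ + a₀ + b₀)*h2a₁ - 4*hb
  have hab₁ : a₁ + b₁ ≠ 0 := by
    intro h
    apply hab0'
    have key : (a₀ - b₀)^2 = 0 := by rw [← hd, h]; ring
    exact pow_eq_zero_iff (two_ne_zero) |>.mp key
  have hab₁' : a₁ - b₁ ≠ 0 := by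
    intro h
    apply hab0'
    have key : (a₀ - b₀)^2 = 0 := by rw [← hd, h]; ring
    exact pow_eq_zero_iff (two_ne_zero) |>.mp key
  have hnt1 : AGM.Nontriv (a₁, b₁) := ⟨ha₁0, hb₁0, hab₁, hab₁'⟩
  have hnt1' : AGM.Nontriv (a₁, -b₁) := by
    refine ⟨ha₁0, neg_ne_zero.mpr hb₁0, ?_, ?_⟩
    · show a₁ + -b₁ ≠ 0
      intro h; exact hab₁' (by linear_combination h)
    · show a₁ - -b₁ ≠ 0
      intro h; exact hab₁ (by linear_combination h)
  -- a square root of a₁ * b₁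
  rw [hpa] at hr2
  have hcases : (p.2 - b₁) * (p.2 + b₁) = 0 := by linear_combination hp2 - hb
  obtain ⟨f, hfp⟩ : ∃ f : F, f ^ 2 = a₁ * b₁ := by
    rcases mul_eq_zero.mp hcases with h | h
    · have hpf : p.2 = b₁ := by linear_combination h
      rw [hpf] at hr2
      exact ⟨r.2, hr2⟩
    · have hpf : p.2 = -b₁ := by linear_combination h
      rw [hpf] at hr2
      exact ⟨i * r.2, by linear_combination (r.2^2)*hi - hr2⟩
  have hf0 : f ≠ 0 := by
    intro h; rw [h] at hfp
    exact mul_ne_zero ha₁0 hb₁0 (by linear_combination -hfp)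
  obtain ⟨A, hA⟩ : ∃ A : F, 2 * A = a₁ + b₁ := ⟨(a₁ + b₁)/2, by field_simp⟩
  obtain ⟨B, hB⟩ : ∃ B : F, 2 * B = a₁ - b₁ := ⟨(a₁ - b₁)/2, by field_simp⟩
  obtain ⟨s, hs4⟩ : ∃ s : F, 4 * s = (a₀ - b₀) * f := ⟨(a₀ - b₀) * f/4, by field_simp⟩
  have E1 : AGM.AdvN 2 (a₁, b₁) ↔ IsSquare (A * f) :=
    my_child_adv2_iff h2 hi a₁ b₁ A f hnt1 hA hfp
  have E2 : AGM.AdvN 2 (a₁, -b₁) ↔ IsSquare (B * (i * f)) :=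
    my_child_adv2_iff h2 hi a₁ (-b₁) B (i * f) hnt1' (by linear_combination hB)
      (by linear_combination (f^2)*hi - hfp)
  rw [E1, E2]
  have h16 : (16:F) ≠ 0 := by
    rw [show (16:F) = 2^4 by norm_num]; exact pow_ne_zero 4 h2
  have hprod : (A * f) * (B * (i * f)) = i * s ^ 2 := by
    apply mul_left_cancel₀ h16
    linear_combination (8*B*f^2*i)*hA + (4*(a₁+b₁)*f^2*i)*hB + (f^2*i)*hd
      - (i*(4*s + (a₀-b₀)*f))*hs4
  have hs0 : s ≠ 0 := by
    intro h; rw [h] at hs4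
    exact (mul_ne_zero hab0' hf0) (by linear_combination -hs4)
  exact my_xor_isSquare hins hs0
    (mul_ne_zero (fun h0 => hab₁ (by linear_combination -hA + 2*h0)) hf0)
    (mul_ne_zero (fun h0 => hab₁' (by linear_combination -hB + 2*h0)) (mul_ne_zero hi0 hf0)) hprod
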